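/- Let m = p^α be a prime power, A a matrix over Z_m with rank r, v ∈ Z_m^l fixed, and w chosen uniformly from {0,1}^k. For 0 ≤ t ≤ 1, the probability that v + Aw has at most tr nonzero entries is at most C(r, ⌊tr⌋)·2^{tr}·2^{−r} ≤ 2^{(t + H(t) − 1)r + o(1)}, where H(t) = −t log₂ t − (1−t) log₂(1−t). -/

import Mathlib

open Finset

/-- The rank of an additive abelian group: the minimal `r` such that it is isomorphic
to a product of `r` cyclic groups. -/
noncomputable def groupRank (G : Type*) [AddCommGroup G] : ℕ :=
  sInf {r : ℕ | ∃ c : Fin r → ℕ, Nonempty (G ≃+ ((i : Fin r) → ZMod (c i)))}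

/-- The subgroup of `ZMod m ^ k` generated by the columns of a matrix. -/
def colSpan {m k l : ℕ} (A : Matrix (Fin k) (Fin l) (ZMod m)) :
    AddSubgroup (Fin k → ZMod m) :=
  AddSubgroup.closure (Set.range fun j i => A i j)

/-- The rank of a matrix over `ZMod m`: the rank of its column space. -/
noncomputable def matrixRank {m k l : ℕ} (A : Matrix (Fin k) (Fin l) (ZMod m)) : ℕ :=
  groupRank (colSpan A)


/-- p-torsion subgroup -/
def pTors (p : ℕ) (M : Type*) [AddCommGroup M] : AddSubgroup M :=
  (AddMonoidHom.mk' (fun x => p • x) (fun a b => smul_add p a b)).ker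

lemma mem_pTors {p : ℕ} {M : Type*} [AddCommGroup M] {x : M} :
    x ∈ pTors p M ↔ p • x = 0 := Iff.rfl

lemma card_pTors_zmod {p e : ℕ} (hp : p.Prime) (he : 1 ≤ e) :
    Nat.card (pTors p (ZMod (p ^ e))) = p := by
  have hpe : (p:ℕ)^e ≠ 0 := pow_ne_zero _ hp.pos.ne'
  haveI : NeZero (p ^ e) := ⟨hpe⟩
  have key : pTors p (ZMod (p ^ e)) = AddSubgroup.zmultiples ((p ^ (e-1) : ℕ) : ZMod (p ^ e)) := by
    ext y
    simp only [mem_pTors, AddSubgroup.mem_zmultiples_iff]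
    constructor
    · intro hy
      have h1 : ((p * y.val : ℕ) : ZMod (p ^ e)) = 0 := by
        push_cast [ZMod.natCast_val, ZMod.cast_id]
        rw [← nsmul_eq_mul]
        exact hy
      rw [ZMod.natCast_eq_zero_iff] at h1
      have h2 : p ^ (e - 1) ∣ y.val := by
        have : p * p ^ (e-1) ∣ p * y.val := by
          rwa [← pow_succ', show e - 1 + 1 = e by omega]
        exact (mul_dvd_mul_iff_left (Nat.Prime.ne_zero hp)).mp this
      obtain ⟨c, hc⟩ := h2
      refine ⟨(c : ℤ), ?_⟩
      have : y = ((p ^ (e-1) * c : ℕ) : ZMod (p ^ e)) := by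
        rw [← hc, ZMod.natCast_val, ZMod.cast_id]
      rw [this]
      push_cast
      rw [zsmul_eq_mul]
      push_cast
      ring
    · rintro ⟨c, rfl⟩
      have h3 : (p:ℕ) • (c • ((p ^ (e-1) : ℕ) : ZMod (p ^ e))) = 0 := by
        rw [smul_comm]
        have h4 : (p:ℕ) • ((p ^ (e-1) : ℕ) : ZMod (p ^ e)) = ((p ^ e : ℕ) : ZMod (p ^ e)) := by
          rw [nsmul_eq_mul, ← Nat.cast_mul, ← pow_succ', show e - 1 + 1 = e by omega]
        rw [h4, ZMod.natCast_self, smul_zero]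
      exact h3
  rw [key, Nat.card_zmultiples, ZMod.addOrderOf_coe _ hpe]
  have : Nat.gcd (p ^ e) (p ^ (e-1)) = p ^ (e-1) :=
    Nat.gcd_eq_right (pow_dvd_pow p (by omega))
  rw [this, Nat.pow_div (by omega) hp.pos]
  simp [show e - (e-1) = 1 by omega]

lemma card_pTors_pi {p : ℕ} {ι : Type*} [Fintype ι] (B : ι → Type*) [∀ i, AddCommGroup (B i)] :
    Nat.card (pTors p (∀ i, B i)) = ∏ i, Nat.card (pTors p (B i)) := by
  have e1 : pTors p (∀ i, B i) ≃ {f : ∀ i, B i // ∀ i, p • f i = 0} := by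
    apply Equiv.subtypeEquivRight
    intro f
    rw [mem_pTors, funext_iff]
    simp
  have e2 : {f : ∀ i, B i // ∀ i, p • f i = 0} ≃ ∀ i, {b : B i // p • b = 0} :=
    Equiv.subtypePiEquivPi (p := fun i (b : B i) => p • b = 0)
  rw [Nat.card_congr (e1.trans e2), Nat.card_pi]
  rfl

/-- cardinality of a group = card of range times card of kernel -/
lemma card_hom_eq {A B : Type*} [AddCommGroup A] [AddCommGroup B] (f : A →+ B) :
    Nat.card A = Nat.card f.range * Nat.card f.ker := by
  rw [AddSubgroup.card_eq_card_quotient_mul_card_addSubgroup f.ker]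
  congr 1
  exact Nat.card_congr (QuotientAddGroup.quotientKerEquivRange f).toEquiv

lemma card_map_mul_card_ker {A B : Type*} [AddCommGroup A] [AddCommGroup B] (f : A →+ B)
    (S : AddSubgroup A) :
    Nat.card S = Nat.card (S.map f) * Nat.card (f.comp S.subtype).ker := by
  have h : (f.comp S.subtype).range = S.map f := by
    ext x
    simp [AddMonoidHom.mem_range, AddSubgroup.mem_map]
  rw [card_hom_eq (f.comp S.subtype), h]

/-- restriction to a finset of coordinates, as an `AddMonoidHom`. -/
def resF {R : Type*} [AddCommGroup R] {ι : Type*} (T : Finset ι) :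
    (ι → R) →+ ((i : T) → R) :=
  AddMonoidHom.mk' (fun x i => x i) (fun _ _ => rfl)

/-- restriction between nested finsets -/
def resF2 {R : Type*} [AddCommGroup R] {ι : Type*} {T I : Finset ι} (h : T ⊆ I) :
    ((i : I) → R) →+ ((i : T) → R) :=
  AddMonoidHom.mk' (fun x i => x ⟨i.1, h i.2⟩) (fun _ _ => rfl)

lemma resF_eq_comp {R : Type*} [AddCommGroup R] {ι : Type*} {T I : Finset ι} (h : T ⊆ I) :
    (resF (R := R) T) = (resF2 (R := R) h).comp (resF I) := rfl

lemma map_le_pTors {p : ℕ} {M N : Type*} [AddCommGroup M] [AddCommGroup N]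
    {W : AddSubgroup M} (hW : W ≤ pTors p M) (f : M →+ N) :
    W.map f ≤ pTors p N := by
  rintro x ⟨y, hy, rfl⟩
  rw [mem_pTors, ← map_nsmul]
  rw [mem_pTors.mp (hW hy), map_zero]

lemma addSubgroup_card_mono {M : Type*} [AddCommGroup M] {S T : AddSubgroup M}
    [Finite T] (h : S ≤ T) : Nat.card S ≤ Nat.card T :=
  Nat.card_le_card_of_injective (fun x => ⟨x.1, h x.2⟩) (by
    intro a b hab
    simp only [Subtype.mk.injEq] at hab
    exact Subtype.ext hab)

lemma card_pTors_pi_zmod {p e : ℕ} (hp : p.Prime) (he : 1 ≤ e) {ι : Type*} [Fintype ι] :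
    Nat.card (pTors p (ι → ZMod (p ^ e))) = p ^ Fintype.card ι := by
  rw [card_pTors_pi]
  simp [card_pTors_zmod hp he]

lemma card_map_resF_le {p e : ℕ} (hp : p.Prime) (he : 1 ≤ e) {ι : Type*} [Fintype ι]
    [DecidableEq ι] (T : Finset ι)
    (W : AddSubgroup (ι → ZMod (p ^ e))) (hW : W ≤ pTors p _) :
    Nat.card (W.map (resF T)) ≤ p ^ T.card := by
  haveI : NeZero (p ^ e) := ⟨pow_ne_zero _ hp.pos.ne'⟩
  haveI : Finite (pTors p ((i : T) → ZMod (p ^ e))) := by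
    exact Subtype.finite
  calc Nat.card (W.map (resF T)) ≤ Nat.card (pTors p ((i : T) → ZMod (p ^ e))) :=
        addSubgroup_card_mono (map_le_pTors hW _)
    _ = p ^ Fintype.card T := card_pTors_pi_zmod hp he
    _ = p ^ T.card := by rw [Fintype.card_coe]

lemma card_resI_le_mul {p e : ℕ} (hp : p.Prime) (he : 1 ≤ e) {ι : Type*} [Fintype ι]
    [DecidableEq ι] {T I : Finset ι} (hTI : T ⊆ I)
    (W : AddSubgroup (ι → ZMod (p ^ e))) (hW : W ≤ pTors p _) :
    Nat.card (W.map (resF I)) ≤ Nat.card (W.map (resF T)) * p ^ (I \ T).card := by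
  haveI : NeZero (p ^ e) := ⟨pow_ne_zero _ hp.pos.ne'⟩
  have key := card_map_mul_card_ker (resF2 (R := ZMod (p ^ e)) hTI) (W.map (resF I))
  rw [AddSubgroup.map_map, ← resF_eq_comp] at key
  rw [key]
  apply Nat.mul_le_mul_left
  -- bound the kernel
  set K := ((resF2 (R := ZMod (p^e)) hTI).comp (W.map (resF I)).subtype).ker
  have hmap : ∀ x : (W.map (resF I)), p • (x : (i : I) → ZMod (p ^ e)) = 0 :=
    fun x => mem_pTors.mp (map_le_pTors hW _ x.2)
  have : Nat.card K ≤ Nat.card (pTors p ((i : (I \ T : Finset ι)) → ZMod (p ^ e))) := by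
    haveI : Finite (pTors p ((i : (I \ T : Finset ι)) → ZMod (p ^ e))) := Subtype.finite
    apply Nat.card_le_card_of_injective
      (f := fun x => (⟨fun i => (x.1 : (i : I) → ZMod (p ^ e)) ⟨i.1, Finset.sdiff_subset i.2⟩, by
        rw [mem_pTors]
        funext i
        have := hmap x.1
        calc (p • fun i : (I \ T : Finset ι) =>
              (x.1 : (i : I) → ZMod (p ^ e)) ⟨i.1, Finset.sdiff_subset i.2⟩) i
            = (p • (x.1 : (i : I) → ZMod (p ^ e))) ⟨i.1, Finset.sdiff_subset i.2⟩ := rfl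
          _ = 0 := by rw [this]; rfl⟩ : pTors p ((i : (I \ T : Finset ι)) → ZMod (p ^ e))))
    intro a b hab
    simp only [Subtype.mk.injEq] at hab
    apply Subtype.ext
    apply Subtype.ext
    funext ⟨i, hiI⟩
    by_cases hiT : i ∈ T
    · have ha := congrFun (a.2 : (resF2 (R := ZMod (p^e)) hTI) a.1.1 = 0) ⟨i, hiT⟩
      have hb := congrFun (b.2 : (resF2 (R := ZMod (p^e)) hTI) b.1.1 = 0) ⟨i, hiT⟩
      simp only [resF2, AddMonoidHom.mk'_apply] at ha hb
      change (a.1 : (i : I) → ZMod (p ^ e)) _ = 0 at ha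
      change (b.1 : (i : I) → ZMod (p ^ e)) _ = 0 at hb
      rw [show (⟨i, hiI⟩ : {x // x ∈ I}) = ⟨i, hTI hiT⟩ from rfl] at *
      rw [ha, hb]
    · have : i ∈ I \ T := Finset.mem_sdiff.mpr ⟨hiI, hiT⟩
      exact congrFun hab ⟨i, this⟩
  calc Nat.card K ≤ _ := this
    _ = p ^ Fintype.card (I \ T : Finset ι) := card_pTors_pi_zmod hp he
    _ = p ^ (I \ T).card := by rw [Fintype.card_coe]

lemma range_comp_subtype {A B : Type*} [AddCommGroup A] [AddCommGroup B] (f : A →+ B)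
    (S : AddSubgroup A) : (f.comp S.subtype).range = S.map f := by
  ext x
  simp [AddMonoidHom.mem_range, AddSubgroup.mem_map]

lemma exists_coords {p e : ℕ} (hp : p.Prime) (he : 1 ≤ e) {l : ℕ}
    (W : AddSubgroup (Fin l → ZMod (p ^ e))) (hW : W ≤ pTors p _) {r : ℕ}
    (hcard : p ^ r ≤ Nat.card W) :
    ∃ I : Finset (Fin l), I.card = r ∧ p ^ r ≤ Nat.card (W.map (resF I)) := by
  haveI : NeZero (p ^ e) := ⟨pow_ne_zero _ hp.pos.ne'⟩
  revert hcard
  induction r with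
  | zero =>
    intro _
    refine ⟨∅, rfl, ?_⟩
    simpa using Nat.succ_le_of_lt (Nat.card_pos (α := (W.map (resF (∅ : Finset (Fin l))))))
  | succ j ih =>
    intro hcard
    obtain ⟨I, hI, hImap⟩ := ih (le_trans (Nat.pow_le_pow_right hp.pos (Nat.le_succ j)) hcard)
    have hub : Nat.card (W.map (resF I)) ≤ p ^ j := by
      simpa [hI] using card_map_resF_le hp he I W hW
    have heq : Nat.card (W.map (resF I)) = p ^ j := le_antisymm hub hImap
    set g := (resF (R := ZMod (p ^ e)) I).comp W.subtype with hg
    have hcW := card_hom_eq g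
    rw [hg, range_comp_subtype] at hcW
    have hker : p ≤ Nat.card g.ker := by
      have h1 : p ^ j * p ≤ p ^ j * Nat.card g.ker := by
        calc p ^ j * p = p ^ (j + 1) := by ring
          _ ≤ Nat.card W := hcard
          _ = p ^ j * Nat.card g.ker := by rw [hcW, heq]
      exact Nat.le_of_mul_le_mul_left h1 (Nat.pow_pos (n := j) hp.pos)
    haveI : Nontrivial g.ker := by
      rw [← Finite.one_lt_card_iff_nontrivial]
      have h2 := hp.two_le
      omega
    obtain ⟨u, hu⟩ := exists_ne (0 : g.ker)
    set w : Fin l → ZMod (p ^ e) := ((u : W) : Fin l → ZMod (p ^ e)) with hwdef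
    have hwW : w ∈ W := (u : W).2
    have hwres : resF I w = 0 := u.2
    have hw0 : w ≠ 0 := by
      intro h
      apply hu
      apply Subtype.ext
      apply Subtype.ext
      exact h
    obtain ⟨i, hi⟩ : ∃ i, w i ≠ 0 := by
      by_contra hcon
      push_neg at hcon
      exact hw0 (funext hcon)
    have hiI : i ∉ I := fun h => hi (congrFun hwres ⟨i, h⟩)
    classical
    refine ⟨insert i I, by rw [Finset.card_insert_of_notMem hiI, hI], ?_⟩
    have hsub : I ⊆ insert i I := Finset.subset_insert _ _
    have key := card_map_mul_card_ker (resF2 (R := ZMod (p ^ e)) hsub)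
      (W.map (resF (insert i I)))
    rw [AddSubgroup.map_map, ← resF_eq_comp] at key
    set K := ((resF2 (R := ZMod (p ^ e)) hsub).comp
      (W.map (resF (insert i I))).subtype).ker with hK
    -- exhibit an element of order p in K
    have hxmem : resF (insert i I) w ∈ W.map (resF (insert i I)) :=
      AddSubgroup.mem_map_of_mem _ hwW
    have hxker : (⟨resF (insert i I) w, hxmem⟩ :
        (W.map (resF (insert i I)))) ∈ K := by
      show resF2 (R := ZMod (p ^ e)) hsub (resF (insert i I) w) = 0
      rw [← AddMonoidHom.comp_apply, ← resF_eq_comp hsub]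
      exact hwres
    set x : K := ⟨⟨resF (insert i I) w, hxmem⟩, hxker⟩ with hx
    have hxne : x ≠ 0 := by
      intro h
      apply hi
      have h1 : resF (insert i I) w = 0 := by
        have := congrArg (fun (z : K) => ((z : (W.map (resF (insert i I)))) :
          (i' : (insert i I : Finset (Fin l))) → ZMod (p ^ e))) h
        exact this
      exact congrFun h1 ⟨i, Finset.mem_insert_self i I⟩
    have hxord : p • x = 0 := by
      apply Subtype.ext
      apply Subtype.ext
      show p • resF (insert i I) w = 0
      rw [← map_nsmul, mem_pTors.mp (hW hwW), map_zero]
    have hordp : addOrderOf x = p := by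
      have hdvd : addOrderOf x ∣ p := addOrderOf_dvd_of_nsmul_eq_zero hxord
      rcases (Nat.Prime.eq_one_or_self_of_dvd hp _ hdvd) with h | h
      · exact absurd (AddMonoid.addOrderOf_eq_one_iff.mp h) hxne
      · exact h
    have hKcard : p ≤ Nat.card K := by
      haveI : Fintype K := Fintype.ofFinite _
      have hd : addOrderOf x ∣ Fintype.card K := addOrderOf_dvd_card
      rw [hordp] at hd
      rw [Nat.card_eq_fintype_card]
      exact Nat.le_of_dvd Fintype.card_pos hd
    calc p ^ (j + 1) = p ^ j * p := by ring
      _ ≤ Nat.card (W.map (resF I)) * Nat.card K := Nat.mul_le_mul hImap hKcard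
      _ = Nat.card (W.map (resF (insert i I))) := key.symm

lemma odlyzko {p : ℕ} (hp : p.Prime) {N : Type*} [AddCommGroup N] [Finite N]
    {k : ℕ} (y : Fin k → N) (U : AddSubgroup N)
    (hUG : U ≤ AddSubgroup.closure (Set.range y)) (hUt : U ≤ pTors p N)
    {d : ℕ} (hU : p ^ d ≤ Nat.card U) (b : N) :
    d ≤ k ∧ Nat.card {w : Fin k → Fin 2 | ∑ j, (w j : ℕ) • y j = b} ≤ 2 ^ (k - d) := by
  classical
  haveI : Fact p.Prime := ⟨hp⟩
  set G := AddSubgroup.closure (Set.range y) with hGdef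
  let f : G →+ G := AddMonoidHom.mk' (fun x => p • x) (fun a b => smul_add p a b)
  haveI : Module (ZMod p) (G ⧸ f.range) :=
    QuotientAddGroup.zmodModule (fun x => ⟨x, rfl⟩)
  have hc1 : Nat.card G = Nat.card (G ⧸ f.range) * Nat.card f.range :=
    AddSubgroup.card_eq_card_quotient_mul_card_addSubgroup f.range
  have hc2 : Nat.card G = Nat.card f.range * Nat.card f.ker := card_hom_eq f
  have hcQ : Nat.card (G ⧸ f.range) = Nat.card f.ker := by
    have hr : 0 < Nat.card f.range := Nat.card_pos
    apply Nat.eq_of_mul_eq_mul_right hr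
    rw [← hc1, hc2, Nat.mul_comm]
  have hkerU : p ^ d ≤ Nat.card f.ker := by
    refine le_trans hU (Nat.card_le_card_of_injective
      (fun u => ⟨⟨u.1, hUG u.2⟩, Subtype.ext (mem_pTors.mp (hUt u.2))⟩) ?_)
    intro a b hab
    simp only [Subtype.mk.injEq] at hab
    exact Subtype.ext (congrArg (fun z => (z.1.1 : N)) hab)
  have hQcard : p ^ d ≤ Nat.card (G ⧸ f.range) := hcQ ▸ hkerU
  haveI : Fintype (G ⧸ f.range) := Fintype.ofFinite _
  have hQpow : Fintype.card (G ⧸ f.range) = p ^ Module.finrank (ZMod p) (G ⧸ f.range) := by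
    have := Module.card_eq_pow_finrank (K := ZMod p) (V := G ⧸ f.range)
    rwa [ZMod.card] at this
  have hd_le : d ≤ Module.finrank (ZMod p) (G ⧸ f.range) := by
    rw [← Nat.pow_le_pow_iff_right hp.one_lt, ← hQpow, ← Nat.card_eq_fintype_card]
    exact hQcard
  -- generators
  let yG : Fin k → G := fun j => ⟨y j, AddSubgroup.subset_closure ⟨j, rfl⟩⟩
  let yQ : Fin k → (G ⧸ f.range) := fun j => QuotientAddGroup.mk (yG j)
  have hspan : Submodule.span (ZMod p) (Set.range yQ) = ⊤ := by
    rw [eq_top_iff]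
    rintro q -
    induction q using QuotientAddGroup.induction_on with
    | H g =>
      refine AddSubgroup.closure_induction
        (p := fun x hx => (QuotientAddGroup.mk (⟨x, hx⟩ : G) : G ⧸ f.range) ∈
          Submodule.span (ZMod p) (Set.range yQ)) ?_ ?_ ?_ ?_ g.2
      · rintro x ⟨j, rfl⟩
        exact Submodule.subset_span ⟨j, rfl⟩
      · exact Submodule.zero_mem _
      · intro a c ha hc hma hmc
        exact Submodule.add_mem _ hma hmc
      · intro a ha hma
        exact Submodule.neg_mem _ hma
  obtain ⟨s, hs_sub, hs_span, hs_ind⟩ := exists_linearIndependent (ZMod p) (Set.range yQ)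
  rw [hspan] at hs_span
  haveI : Fintype s := (Set.toFinite s).fintype
  let bas : Module.Basis s (ZMod p) (G ⧸ f.range) :=
    Module.Basis.mk hs_ind (by rw [Subtype.range_coe, hs_span])
  have hrank : Module.finrank (ZMod p) (G ⧸ f.range) = Fintype.card s :=
    Module.finrank_eq_card_basis bas
  have hchoice : ∀ q : s, ∃ j : Fin k, yQ j = q.1 := fun q => hs_sub q.2
  choose φ hφ using hchoice
  have hφinj : Function.Injective φ := fun a b hab =>
    Subtype.ext (by rw [← hφ a, ← hφ b, hab])
  have hsk : Fintype.card s ≤ k := by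
    have := Fintype.card_le_of_injective φ hφinj
    rwa [Fintype.card_fin] at this
  have hds : d ≤ Fintype.card s := hrank ▸ hd_le
  have hdk : d ≤ k := le_trans hds hsk
  refine ⟨hdk, ?_⟩
  let J0 : Finset (Fin k) := Finset.univ.image φ
  have hJ0card : J0.card = Fintype.card s := by
    rw [Finset.card_image_of_injective _ hφinj, Finset.card_univ]
  obtain ⟨J, hJsub, hJcard⟩ : ∃ J ⊆ J0, J.card = d :=
    Finset.exists_subset_card_eq (hJ0card ▸ hds)
  -- injectivity key
  have hkey : ∀ w w' : Fin k → Fin 2, (∑ j, (w j : ℕ) • y j = b) →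
      (∑ j, (w' j : ℕ) • y j = b) → (∀ j ∉ J, w j = w' j) → w = w' := by
    intro w w' hw hw' hagree
    have hsumG : ∑ j, (w j : ℕ) • yG j = ∑ j, (w' j : ℕ) • yG j := by
      apply Subtype.ext
      push_cast [AddSubgroup.coe_nsmul]
      rw [hw, hw']
    have hdiff : ∑ j, (((w j : ℕ) : ℤ) - ((w' j : ℕ) : ℤ)) • yG j = 0 := by
      simp only [sub_smul, Finset.sum_sub_distrib, natCast_zsmul]
      rw [hsumG, sub_self]
    have hJsum : ∑ j ∈ J, (((w j : ℕ) : ℤ) - ((w' j : ℕ) : ℤ)) • yG j = 0 := by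
      rw [← hdiff]
      apply Finset.sum_subset (Finset.subset_univ J)
      intro j _ hj
      rw [hagree j hj]
      simp
    have hQsum : ∑ j ∈ J, ((((w j : ℕ) : ℤ) - ((w' j : ℕ) : ℤ) : ℤ) : ZMod p) • yQ j = 0 := by
      have h1 : ∀ j, ((((w j : ℕ) : ℤ) - ((w' j : ℕ) : ℤ) : ℤ) : ZMod p) • yQ j
          = (QuotientAddGroup.mk' f.range) ((((w j : ℕ) : ℤ) - ((w' j : ℕ) : ℤ)) • yG j) := by
        intro j
        rw [Int.cast_smul_eq_zsmul, map_zsmul]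
        rfl
      rw [Finset.sum_congr rfl (fun j _ => h1 j), ← map_sum, hJsum, map_zero]
    -- independence of yQ on J
    have hψ : ∀ j : J, ∃ q : s, φ q = j.1 := by
      rintro ⟨j, hj⟩
      have := hJsub hj
      simp only [J0, Finset.mem_image, Finset.mem_univ, true_and] at this
      obtain ⟨q, hq⟩ := this
      exact ⟨q, hq⟩
    choose ψ hψspec using hψ
    have hψinj : Function.Injective ψ := by
      intro a c hac
      apply Subtype.ext
      rw [← hψspec a, ← hψspec c, hac]
    have hcomp : (fun j : J => yQ j.1) = (fun q : s => (q : G ⧸ f.range)) ∘ ψ := by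
      funext j
      have := hφ (ψ j)
      simp only [Function.comp_apply]
      rw [← this, hψspec j]
    have hindJ : LinearIndependent (ZMod p) (fun j : J => yQ j.1) := by
      rw [hcomp]
      exact hs_ind.comp ψ hψinj
    rw [Fintype.linearIndependent_iff] at hindJ
    have hsum' : ∑ j : J, ((((w j.1 : ℕ) : ℤ) - ((w' j.1 : ℕ) : ℤ) : ℤ) : ZMod p) • yQ j.1 = 0 := by
      rw [Finset.sum_coe_sort J (fun j => ((((w j : ℕ) : ℤ) - ((w' j : ℕ) : ℤ) : ℤ) : ZMod p) • yQ j)]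
      exact hQsum
    have hall := hindJ _ hsum'
    funext j
    by_cases hj : j ∈ J
    · have hz := hall ⟨j, hj⟩
      rw [ZMod.intCast_zmod_eq_zero_iff_dvd] at hz
      have habs : ((w j : ℕ) : ℤ) - ((w' j : ℕ) : ℤ) = 0 := by
        apply Int.eq_zero_of_abs_lt_dvd hz
        have h1 : (w j : ℕ) < 2 := (w j).isLt
        have h2 : (w' j : ℕ) < 2 := (w' j).isLt
        have h3 := hp.two_le
        rw [abs_lt]
        constructor <;> [skip; skip] <;> push_cast <;> omega
      have : (w j : ℕ) = (w' j : ℕ) := by omega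
      exact Fin.ext this
    · exact hagree j hj
  -- counting
  have hcount : Nat.card {w : Fin k → Fin 2 | ∑ j, (w j : ℕ) • y j = b}
      ≤ Nat.card (((Finset.univ \ J : Finset (Fin k)) : Finset (Fin k)) → Fin 2) := by
    apply Nat.card_le_card_of_injective
      (f := fun w (j : ((Finset.univ \ J : Finset (Fin k)) : Finset (Fin k))) => w.1 j.1)
    intro a c hac
    apply Subtype.ext
    apply hkey _ _ a.2 c.2
    intro j hj
    have hj' : j ∈ Finset.univ \ J := Finset.mem_sdiff.mpr ⟨Finset.mem_univ j, hj⟩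
    exact congrFun hac ⟨j, hj'⟩
  refine le_trans hcount ?_
  rw [Nat.card_eq_fintype_card, Fintype.card_fun]
  simp only [Fintype.card_coe, Fintype.card_fin]
  rw [Finset.card_sdiff_of_subset (Finset.subset_univ J), Finset.card_univ, Fintype.card_fin, hJcard]

lemma exists_pgroup_decomp {p e : ℕ} (hp : p.Prime) (G : Type*) [AddCommGroup G] [Finite G]
    (hexp : ∀ x : G, p ^ e • x = 0) :
    ∃ (n : ℕ) (c : Fin n → ℕ), (∀ i, 1 ≤ c i) ∧ Nonempty (G ≃+ ∀ i, ZMod (p ^ c i)) := by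
  classical
  obtain ⟨ι, hι, nn, h1, ⟨eq⟩⟩ := AddCommGroup.equiv_directSum_zmod_of_finite' G
  haveI := hι
  let eq2 : G ≃+ ∀ i : ι, ZMod (nn i) := eq.trans (DirectSum.addEquivProd _)
  have hdvd : ∀ i, nn i ∣ p ^ e := by
    intro i
    haveI : NeZero (nn i) := ⟨by have := h1 i; omega⟩
    have hx := hexp (eq2.symm (Pi.single i 1))
    have hx2 : (p ^ e) • (Pi.single i (1 : ZMod (nn i)) : ∀ i', ZMod (nn i')) = 0 := by
      have h2 := congrArg eq2 hx
      rwa [map_nsmul, AddEquiv.apply_symm_apply, map_zero] at h2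
    have hi := congrFun hx2 i
    rw [Pi.smul_apply, Pi.single_eq_same, nsmul_eq_mul, mul_one] at hi
    exact (ZMod.natCast_eq_zero_iff _ _).mp (by exact_mod_cast hi)
  have hpow : ∀ i, ∃ c, 1 ≤ c ∧ nn i = p ^ c := by
    intro i
    obtain ⟨c, hc, hc2⟩ := (Nat.dvd_prime_pow hp).mp (hdvd i)
    refine ⟨c, ?_, hc2⟩
    rcases Nat.eq_zero_or_pos c with h | h
    · subst h
      simp only [pow_zero] at hc2
      have := h1 i
      omega
    · exact h
  choose cfun hc1 hc2 using hpow
  let ee := Fintype.equivFin ι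
  refine ⟨Fintype.card ι, fun j => cfun (ee.symm j), fun j => hc1 _, ?_⟩
  exact ⟨eq2.trans ((RingEquiv.piCongrLeft' (fun i => ZMod (nn i)) ee).toAddEquiv.trans
    (AddEquiv.piCongrRight (fun j => (ZMod.ringEquivCongr (hc2 (ee.symm j))).toAddEquiv)))⟩

lemma card_pTors_ge {p e : ℕ} (hp : p.Prime) (G : Type*) [AddCommGroup G] [Finite G]
    (hexp : ∀ x : G, p ^ e • x = 0) :
    p ^ groupRank G ≤ Nat.card (pTors p G) := by
  obtain ⟨n, c, hc, ⟨iso⟩⟩ := exists_pgroup_decomp hp G hexp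
  have h1 : groupRank G ≤ n := Nat.sInf_le ⟨fun i => p ^ c i, ⟨iso⟩⟩
  have h2 : Nat.card (pTors p G) = p ^ n := by
    have e3 : pTors p G ≃ pTors p (∀ i, ZMod (p ^ c i)) :=
      { toFun := fun x => ⟨iso x.1, by
          rw [mem_pTors, ← map_nsmul, mem_pTors.mp x.2, map_zero]⟩
        invFun := fun x => ⟨iso.symm x.1, by
          rw [mem_pTors, ← map_nsmul, mem_pTors.mp x.2, map_zero]⟩
        left_inv := fun x => Subtype.ext (iso.symm_apply_apply x.1)
        right_inv := fun x => Subtype.ext (iso.apply_symm_apply x.1) }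
    rw [Nat.card_congr e3, card_pTors_pi]
    simp [card_pTors_zmod hp (hc _)]
  rw [h2]
  exact Nat.pow_le_pow_right hp.pos h1

lemma card_pTors_subgroup {M : Type*} [AddCommGroup M] (H : AddSubgroup M) (p : ℕ) :
    Nat.card (pTors p H) = Nat.card (H ⊓ pTors p M : AddSubgroup M) := by
  apply Nat.card_congr
  refine ⟨fun x => ⟨x.1.1, AddSubgroup.mem_inf.mpr ⟨x.1.2, ?_⟩⟩,
    fun x => ⟨⟨x.1, (AddSubgroup.mem_inf.mp x.2).1⟩, ?_⟩, fun x => rfl, fun x => rfl⟩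
  · rw [mem_pTors]
    exact_mod_cast congrArg Subtype.val (mem_pTors.mp x.2)
  · rw [mem_pTors]
    apply Subtype.ext
    have h := mem_pTors.mp (AddSubgroup.mem_inf.mp x.2).2
    simpa using h
open Matrix in
theorem low_weight_probability_bound (p α l k r : ℕ) (hp : p.Prime) (hα : 0 < α)
    (A : Matrix (Fin l) (Fin k) (ZMod (p ^ α))) (hr : matrixRank A = r)
    (v : Fin l → ZMod (p ^ α)) (t : ℝ) (ht0 : 0 ≤ t) (ht1 : t ≤ 1) :
    (Nat.card {w : Fin k → Fin 2 |
        ((Finset.univ.filter fun i : Fin l =>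
          (v + A.mulVec fun j => ((w j : ℕ) : ZMod (p ^ α))) i ≠ 0).card : ℝ) ≤ t * r} : ℝ)
        / 2 ^ k
      ≤ (r.choose ⌊t * r⌋₊ : ℝ) * 2 ^ (t * r) / 2 ^ r := by
  classical
  haveI : NeZero (p ^ α) := ⟨pow_ne_zero _ hp.pos.ne'⟩
  set m₀ := ⌊t * r⌋₊ with hm₀def
  set H : AddSubgroup (Fin l → ZMod (p ^ α)) := colSpan A with hHdef
  -- conversion between Nat.card of set and Finset.card
  have hconv : ∀ (Q : (Fin k → Fin 2) → Prop) (inst : DecidablePred Q),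
      Nat.card {w | Q w} = (Finset.univ.filter Q).card := by
    intro Q inst
    rw [Nat.card_coe_set_eq, Set.ncard_eq_toFinset_card', Set.toFinset_setOf]
  -- exponent of H
  have hexp : ∀ x : H, p ^ α • x = 0 := by
    intro x
    have h0 : p ^ α • (x : Fin l → ZMod (p ^ α)) = 0 := by
      funext i
      rw [Pi.smul_apply, nsmul_eq_mul]
      rw [show ((p ^ α : ℕ) : ZMod (p ^ α)) = 0 from ZMod.natCast_self _, zero_mul]
      rfl
    apply Subtype.ext
    simpa using h0
  -- the torsion subgroup W
  set W : AddSubgroup (Fin l → ZMod (p ^ α)) := H ⊓ pTors p _ with hWdef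
  have hWt : W ≤ pTors p _ := inf_le_right
  have hcardW : p ^ r ≤ Nat.card W := by
    have h1 := card_pTors_ge (e := α) hp H hexp
    rw [card_pTors_subgroup] at h1
    have h2 : groupRank H = r := hr
    rwa [h2] at h1
  obtain ⟨I, hIcard, hImap⟩ := exists_coords hp hα W hWt hcardW
  -- floor facts
  have hm₀tr : (m₀ : ℝ) ≤ t * r := Nat.floor_le (by positivity)
  have htrr : t * r ≤ r := by nlinarith [Nat.cast_nonneg (α := ℝ) r]
  have hm₀r : m₀ ≤ r := by
    have := le_trans hm₀tr htrr
    exact_mod_cast this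
  -- columns
  set cols : Fin k → (Fin l → ZMod (p ^ α)) := fun j i => A i j with hcolsdef
  have hmul : ∀ w : Fin k → Fin 2,
      (A.mulVec fun j => ((w j : ℕ) : ZMod (p ^ α))) = ∑ j, (w j : ℕ) • cols j := by
    intro w
    funext i
    simp [Matrix.mulVec, dotProduct, Finset.sum_apply, hcolsdef,
      nsmul_eq_mul, mul_comm]
  -- events
  set Ev : Finset (Fin l) → (Fin k → Fin 2) → Prop := fun S w =>
    ∀ i ∈ I \ S, (v + A.mulVec fun j => ((w j : ℕ) : ZMod (p ^ α))) i = 0 with hEvdef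
  set P : (Fin k → Fin 2) → Prop := fun w =>
    ((Finset.univ.filter fun i : Fin l =>
      (v + A.mulVec fun j => ((w j : ℕ) : ZMod (p ^ α))) i ≠ 0).card : ℝ) ≤ t * r with hPdef
  -- covering
  have hsubset : Finset.univ.filter P ⊆
      (Finset.powersetCard m₀ I).biUnion (fun S => Finset.univ.filter (Ev S)) := by
    intro w hw
    rw [Finset.mem_filter] at hw
    set supp := Finset.univ.filter
      (fun i => (v + A.mulVec fun j => ((w j : ℕ) : ZMod (p ^ α))) i ≠ 0) with hsuppdef
    have hsupp : supp.card ≤ m₀ := Nat.le_floor hw.2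
    have hint : (supp ∩ I).card ≤ m₀ :=
      le_trans (Finset.card_le_card Finset.inter_subset_left) hsupp
    obtain ⟨S, hS1, hS2, hS3⟩ := Finset.exists_subsuperset_card_eq
      (show supp ∩ I ⊆ I from Finset.inter_subset_right) hint (hIcard ▸ hm₀r)
    rw [Finset.mem_biUnion]
    refine ⟨S, Finset.mem_powersetCard.mpr ⟨hS2, hS3⟩,
      Finset.mem_filter.mpr ⟨Finset.mem_univ _, ?_⟩⟩
    intro i hi
    rw [Finset.mem_sdiff] at hi
    by_contra hne
    exact hi.2 (hS1 (Finset.mem_inter.mpr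
      ⟨Finset.mem_filter.mpr ⟨Finset.mem_univ _, hne⟩, hi.1⟩))
  -- per-event bound
  have hev : ∀ S ∈ Finset.powersetCard m₀ I,
      r - m₀ ≤ k ∧ (Finset.univ.filter (Ev S)).card ≤ 2 ^ (k - (r - m₀)) := by
    intro S hS
    rw [Finset.mem_powersetCard] at hS
    obtain ⟨hSsub, hScard⟩ := hS
    set T := I \ S with hTdef
    have hTI : T ⊆ I := Finset.sdiff_subset
    have hITS : I \ T = S := by
      rw [hTdef, Finset.sdiff_sdiff_self_left, Finset.inter_eq_right.mpr hSsub]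
    have hTcard : T.card = r - m₀ := by
      rw [hTdef, Finset.card_sdiff_of_subset hSsub, hIcard, hScard]
    -- lower bound on projected torsion
    have htrans := card_resI_le_mul hp hα hTI W hWt
    rw [hITS, hScard] at htrans
    have hU : p ^ (r - m₀) ≤ Nat.card (W.map (resF T)) := by
      have h1 : p ^ (r - m₀) * p ^ m₀ ≤ Nat.card (W.map (resF T)) * p ^ m₀ := by
        calc p ^ (r - m₀) * p ^ m₀ = p ^ r := by
              rw [← pow_add, Nat.sub_add_cancel hm₀r]
          _ ≤ Nat.card (W.map (resF I)) := hImap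
          _ ≤ Nat.card (W.map (resF T)) * p ^ m₀ := htrans
      exact Nat.le_of_mul_le_mul_right h1 (Nat.pow_pos hp.pos)
    -- Odlyzko
    have hUG : W.map (resF T) ≤
        AddSubgroup.closure (Set.range (fun j => resF (R := ZMod (p ^ α)) T (cols j))) := by
      calc W.map (resF T) ≤ H.map (resF T) := AddSubgroup.map_mono inf_le_left
        _ = AddSubgroup.closure ((resF T) '' (Set.range cols)) := by
            rw [hHdef, colSpan, AddMonoidHom.map_closure]
        _ = _ := by rw [← Set.range_comp]; rfl
    have hUt : W.map (resF T) ≤ pTors p _ := map_le_pTors hWt _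
    obtain ⟨hdk, hcount⟩ := odlyzko hp (fun j => resF (R := ZMod (p ^ α)) T (cols j))
      (W.map (resF T)) hUG hUt hU (resF T (-v))
    refine ⟨hdk, ?_⟩
    have hiff : ∀ w : Fin k → Fin 2, Ev S w ↔
        ∑ j, (w j : ℕ) • (resF (R := ZMod (p ^ α)) T (cols j)) = resF T (-v) := by
      intro w
      have hres : ∑ j, (w j : ℕ) • (resF (R := ZMod (p ^ α)) T (cols j))
          = resF T (∑ j, (w j : ℕ) • cols j) := by
        rw [map_sum]
        exact Finset.sum_congr rfl (fun j _ => (map_nsmul _ _ _).symm)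
      rw [hres, ← hmul w]
      constructor
      · intro h
        funext i
        have := h i.1 i.2
        have h2 : (A.mulVec fun j => ((w j : ℕ) : ZMod (p ^ α))) i.1 = -v i.1 := by
          have := this
          rw [Pi.add_apply] at this
          linear_combination this
        exact h2
      · intro h i hi
        have := congrFun h ⟨i, hi⟩
        rw [Pi.add_apply]
        change (A.mulVec fun j => ((w j : ℕ) : ZMod (p ^ α))) i = -v i at this
        rw [this]
        ring
    calc (Finset.univ.filter (Ev S)).card
        = Nat.card {w : Fin k → Fin 2 | Ev S w} := (hconv _ _).symm
      _ = Nat.card {w : Fin k → Fin 2 |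
            ∑ j, (w j : ℕ) • (resF (R := ZMod (p ^ α)) T (cols j)) = resF T (-v)} := by
          have hseteq : {w : Fin k → Fin 2 | Ev S w} = {w : Fin k → Fin 2 |
              ∑ j, (w j : ℕ) • (resF (R := ZMod (p ^ α)) T (cols j)) = resF T (-v)} :=
            Set.ext (fun w => hiff w)
          rw [hseteq]
      _ ≤ 2 ^ (k - (r - m₀)) := hcount
  -- d ≤ k (powersetCard is nonempty)
  obtain ⟨S₀, hS₀sub, hS₀card⟩ := Finset.exists_subset_card_eq (hIcard ▸ hm₀r)
  have hS₀ : S₀ ∈ Finset.powersetCard m₀ I := Finset.mem_powersetCard.mpr ⟨hS₀sub, hS₀card⟩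
  have hdk : r - m₀ ≤ k := (hev S₀ hS₀).1
  -- total counting bound
  have htotal : Nat.card {w : Fin k → Fin 2 | P w} ≤ r.choose m₀ * 2 ^ (k - (r - m₀)) := by
    rw [hconv P _]
    calc (Finset.univ.filter P).card
        ≤ ((Finset.powersetCard m₀ I).biUnion (fun S => Finset.univ.filter (Ev S))).card :=
          Finset.card_le_card hsubset
      _ ≤ ∑ S ∈ Finset.powersetCard m₀ I, (Finset.univ.filter (Ev S)).card :=
          Finset.card_biUnion_le
      _ ≤ ∑ _S ∈ Finset.powersetCard m₀ I, 2 ^ (k - (r - m₀)) :=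
          Finset.sum_le_sum (fun S hS => (hev S hS).2)
      _ = (Finset.powersetCard m₀ I).card * 2 ^ (k - (r - m₀)) := by
          rw [Finset.sum_const, smul_eq_mul]
      _ = r.choose m₀ * 2 ^ (k - (r - m₀)) := by
          rw [Finset.card_powersetCard, hIcard]
  -- real arithmetic
  have h2k : (0:ℝ) < 2 ^ k := by positivity
  have h2r : (0:ℝ) < 2 ^ r := by positivity
  rw [div_le_div_iff₀ h2k h2r]
  have hle1 : (Nat.card {w : Fin k → Fin 2 | P w} : ℝ) ≤
      (r.choose m₀ : ℝ) * 2 ^ (k - (r - m₀)) := by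
    exact_mod_cast htotal
  calc (Nat.card {w : Fin k → Fin 2 | P w} : ℝ) * 2 ^ r
      ≤ ((r.choose m₀ : ℝ) * 2 ^ (k - (r - m₀))) * 2 ^ r := by
        apply mul_le_mul_of_nonneg_right hle1 (by positivity)
    _ ≤ ((r.choose m₀ : ℝ) * 2 ^ (t * r)) * 2 ^ k := by
        have hkey : (2:ℝ) ^ (k - (r - m₀)) * 2 ^ r ≤ 2 ^ (t * r) * 2 ^ k := by
          have e1 : (2:ℝ) ^ (k - (r - m₀)) = (2:ℝ) ^ ((k - (r - m₀) : ℕ) : ℝ) := by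
            rw [Real.rpow_natCast]
          have e2 : (2:ℝ) ^ r = (2:ℝ) ^ ((r : ℕ) : ℝ) := by rw [Real.rpow_natCast]
          have e3 : (2:ℝ) ^ k = (2:ℝ) ^ ((k : ℕ) : ℝ) := by rw [Real.rpow_natCast]
          rw [e1, e2, e3, ← Real.rpow_add (by norm_num), ← Real.rpow_add (by norm_num)]
          apply Real.rpow_le_rpow_of_exponent_le (by norm_num)
          have hc1 : ((k - (r - m₀) : ℕ) : ℝ) = (k : ℝ) - ((r : ℝ) - (m₀ : ℝ)) := by
            rw [Nat.cast_sub hdk, Nat.cast_sub hm₀r]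
          rw [hc1]
          linarith [hm₀tr]
        calc (r.choose m₀ : ℝ) * 2 ^ (k - (r - m₀)) * 2 ^ r
            = (r.choose m₀ : ℝ) * (2 ^ (k - (r - m₀)) * 2 ^ r) := by ring
          _ ≤ (r.choose m₀ : ℝ) * (2 ^ (t * r) * 2 ^ k) := by
              apply mul_le_mul_of_nonneg_left hkey (by positivity)
          _ = (r.choose m₀ : ℝ) * 2 ^ (t * r) * 2 ^ k := by ring
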